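/- Let X be an m×s real matrix, σ > 0 a real number with ‖X v‖ ≥ σ ‖v‖ for all v ∈ ℝˢ, and let R̄ be an s×s real matrix satisfying R̄ᵀ R̄ = Xᵀ X + E for some s×s matrix E with ‖E‖₂ < σ². Then R̄ is invertible and ‖R̄⁻¹‖₂ ≤ 1 / √(σ² − ‖E‖₂). -/

import Mathlib

open Matrix
open scoped Matrix.Norms.L2Operator

lemma inner_symm_eq_dot {k : ℕ} (u w : Fin k → ℝ) :
    (inner ℝ ((EuclideanSpace.equiv (Fin k) ℝ).symm u)
      ((EuclideanSpace.equiv (Fin k) ℝ).symm w) : ℝ) = u ⬝ᵥ w := by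
  simp [PiLp.inner_apply, dotProduct, RCLike.inner_apply, mul_comm]

lemma norm_sq_symm_eq_dot {k : ℕ} (u : Fin k → ℝ) :
    ‖(EuclideanSpace.equiv (Fin k) ℝ).symm u‖ ^ 2 = u ⬝ᵥ u := by
  rw [← real_inner_self_eq_norm_sq, inner_symm_eq_dot]

/-- **Weyl-type bound on `‖R̄⁻¹‖₂` (equation (4.6)).**
If `σ > 0` is a lower bound on the smallest singular value of `X`
(`‖X v‖ ≥ σ ‖v‖` for all `v`), `R̄ᵀ R̄ = Xᵀ X + E`, and `‖E‖₂ < σ²`, then `R̄` is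
invertible and `‖R̄⁻¹‖₂ ≤ 1 / √(σ² - ‖E‖₂)`. -/
theorem weyl_type_inverse_bound (m s : ℕ)
    (X : Matrix (Fin m) (Fin s) ℝ)
    (Rbar E : Matrix (Fin s) (Fin s) ℝ)
    (σ : ℝ) (hσ : 0 < σ)
    (hX : ∀ v : EuclideanSpace ℝ (Fin s),
      σ * ‖v‖ ≤ ‖(EuclideanSpace.equiv (Fin m) ℝ).symm (X *ᵥ v)‖)
    (hChol : Rbarᵀ * Rbar = Xᵀ * X + E)
    (hE : ‖E‖ < σ ^ 2) :
    IsUnit Rbar ∧ ‖Rbar⁻¹‖ ≤ 1 / Real.sqrt (σ ^ 2 - ‖E‖) := by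
  set c : ℝ := σ ^ 2 - ‖E‖ with hc
  have hc0 : 0 < c := by simp [hc]; linarith
  -- key lower bound
  have key : ∀ u : Fin s → ℝ,
      c * ‖(EuclideanSpace.equiv (Fin s) ℝ).symm u‖ ^ 2 ≤ (Rbar *ᵥ u) ⬝ᵥ (Rbar *ᵥ u) := by
    intro u
    have h2 : (Rbar *ᵥ u) ⬝ᵥ (Rbar *ᵥ u) = u ⬝ᵥ ((Rbarᵀ * Rbar) *ᵥ u) := by
      rw [← Matrix.mulVec_mulVec]
      conv_rhs => rw [Matrix.dotProduct_mulVec, Matrix.vecMul_transpose]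
    have h3 : u ⬝ᵥ ((Xᵀ * X) *ᵥ u) = (X *ᵥ u) ⬝ᵥ (X *ᵥ u) := by
      rw [← Matrix.mulVec_mulVec, Matrix.dotProduct_mulVec, Matrix.vecMul_transpose]
    have hXu : σ ^ 2 * ‖(EuclideanSpace.equiv (Fin s) ℝ).symm u‖ ^ 2
        ≤ (X *ᵥ u) ⬝ᵥ (X *ᵥ u) := by
      have hX5 : σ * ‖(EuclideanSpace.equiv (Fin s) ℝ).symm u‖
          ≤ ‖(EuclideanSpace.equiv (Fin m) ℝ).symm (X *ᵥ u)‖ :=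
        hX ((EuclideanSpace.equiv (Fin s) ℝ).symm u)
      have h4 : ‖(EuclideanSpace.equiv (Fin m) ℝ).symm (X *ᵥ u)‖ ^ 2 = (X *ᵥ u) ⬝ᵥ (X *ᵥ u) :=
        norm_sq_symm_eq_dot _
      nlinarith [mul_self_le_mul_self
        (mul_nonneg hσ.le (norm_nonneg ((EuclideanSpace.equiv (Fin s) ℝ).symm u))) hX5]
    have hEu : |u ⬝ᵥ (E *ᵥ u)| ≤ ‖E‖ * ‖(EuclideanSpace.equiv (Fin s) ℝ).symm u‖ ^ 2 := by
      have h5 := abs_real_inner_le_norm ((EuclideanSpace.equiv (Fin s) ℝ).symm u)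
        ((EuclideanSpace.equiv (Fin s) ℝ).symm (E *ᵥ u))
      rw [inner_symm_eq_dot] at h5
      have h6 : ‖(EuclideanSpace.equiv (Fin s) ℝ).symm (E *ᵥ u)‖
          ≤ ‖E‖ * ‖(EuclideanSpace.equiv (Fin s) ℝ).symm u‖ :=
        E.l2_opNorm_mulVec ((EuclideanSpace.equiv (Fin s) ℝ).symm u)
      nlinarith [mul_le_mul_of_nonneg_left h6
        (norm_nonneg ((EuclideanSpace.equiv (Fin s) ℝ).symm u))]
    have h7 : u ⬝ᵥ ((Rbarᵀ * Rbar) *ᵥ u) = (X *ᵥ u) ⬝ᵥ (X *ᵥ u) + u ⬝ᵥ (E *ᵥ u) := by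
      rw [hChol, Matrix.add_mulVec, dotProduct_add, h3]
    rw [h2, h7]
    have h8 := (abs_le.mp hEu).1
    simp only [hc]
    nlinarith
  -- injectivity, hence invertibility
  have hinj : Function.Injective (Rbar.mulVec) := by
    intro u w huw
    have h0 : Rbar *ᵥ (u - w) = 0 := by
      rw [Matrix.mulVec_sub, huw, sub_self]
    have hk0 := key (u - w)
    rw [h0] at hk0
    simp only [zero_dotProduct] at hk0
    have hn : ‖(EuclideanSpace.equiv (Fin s) ℝ).symm (u - w)‖ = 0 := by
      by_contra h
      have hpos : 0 < ‖(EuclideanSpace.equiv (Fin s) ℝ).symm (u - w)‖ :=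
        lt_of_le_of_ne (norm_nonneg _) (Ne.symm h)
      nlinarith [mul_pos hc0 (mul_pos hpos hpos)]
    have h9 : (EuclideanSpace.equiv (Fin s) ℝ).symm (u - w) = 0 := norm_eq_zero.mp hn
    have huw0 : u - w = 0 := by
      simpa only [ContinuousLinearEquiv.apply_symm_apply, map_zero] using
        congrArg (EuclideanSpace.equiv (Fin s) ℝ) h9
    exact sub_eq_zero.mp huw0
  have hUnit : IsUnit Rbar := Matrix.mulVec_injective_iff_isUnit.mp hinj
  refine ⟨hUnit, ?_⟩
  have hdet : IsUnit Rbar.det := (Matrix.isUnit_iff_isUnit_det Rbar).mp hUnit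
  have hRR : Rbar * Rbar⁻¹ = 1 := Matrix.mul_nonsing_inv Rbar hdet
  -- operator norm bound
  rw [Matrix.l2_opNorm_def]
  refine ContinuousLinearMap.opNorm_le_bound _ (by positivity) fun x => ?_
  simp only [LinearEquiv.trans_apply, LinearMap.coe_toContinuousLinearMap',
    Matrix.toEuclideanLin_apply]
  set u : Fin s → ℝ := Rbar⁻¹ *ᵥ (WithLp.equiv 2 (Fin s → ℝ)) x with hu
  have hx : Rbar *ᵥ u = (WithLp.equiv 2 (Fin s → ℝ)) x := by
    rw [hu, Matrix.mulVec_mulVec, hRR, Matrix.one_mulVec]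
  have hk := key u
  rw [hx] at hk
  have hxn : ((WithLp.equiv 2 (Fin s → ℝ)) x) ⬝ᵥ ((WithLp.equiv 2 (Fin s → ℝ)) x) = ‖x‖ ^ 2 := by
    have h10 := norm_sq_symm_eq_dot (k := s) ((WithLp.equiv 2 (Fin s → ℝ)) x)
    simpa using h10.symm
  rw [hxn] at hk
  simp only [PiLp.continuousLinearEquiv_symm_apply] at hk ⊢
  have hsc : 0 < Real.sqrt c := Real.sqrt_pos.mpr hc0
  have hsq : Real.sqrt c ^ 2 = c := Real.sq_sqrt hc0.le
  have hv0 : (0:ℝ) ≤ ‖(WithLp.equiv 2 (Fin s → ℝ)).symm u‖ := norm_nonneg _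
  have hx0 : (0:ℝ) ≤ ‖x‖ := norm_nonneg _
  rw [div_mul_eq_mul_div, one_mul, le_div_iff₀ hsc]
  have hux : WithLp.toLp 2 (Rbar⁻¹ *ᵥ x.ofLp) = WithLp.toLp 2 u := rfl
  have hv0' : (0:ℝ) ≤ ‖WithLp.toLp 2 u‖ := norm_nonneg _
  rw [hux]
  nlinarith
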